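/- Let φ be a ONE-IN-THREE 3SAT instance over n variables and let t_h : ℝⁿ × ℝ → ℝ be the associated homogenized quartic trigonometric polynomial. Then the origin is locally asymptotically stable for the trigonometric vector field ż = −∇t_h(z) if and only if no assignment b : Fin n → {0,1} one-in-three-satisfies φ. -/

import Mathlib

noncomputable section

open Real Set Filter

/-- A literal: a variable index together with a sign (`true` = the variable itself,
`false` = its negation). -/
abbrev Lit (n : ℕ) := Fin n × Bool

/-- A clause of a ONE-IN-THREE 3SAT instance: a triple of literals. -/
abbrev Clause3 (n : ℕ) := Lit n × Lit n × Lit n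

/-- Value of a literal under a real assignment `b`. -/
def litVal {n : ℕ} (b : Fin n → ℝ) (l : Lit n) : ℝ :=
  if l.2 then b l.1 else 1 - b l.1

/-- Sum of the three literal values of a clause under a real assignment `b`. -/
def clauseVal {n : ℕ} (b : Fin n → ℝ) (c : Clause3 n) : ℝ :=
  litVal b c.1 + litVal b c.2.1 + litVal b c.2.2

/-- A boolean assignment viewed as a `{0,1}`-valued real assignment. -/
def boolToReal {n : ℕ} (b : Fin n → Bool) : Fin n → ℝ := fun i => if b i then 1 else 0

/-- `b` one-in-three-satisfies `φ`: in every clause the three literal values sum to `1`. -/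
def OneInThreeSat {n : ℕ} (b : Fin n → Bool) (φ : List (Clause3 n)) : Prop :=
  ∀ c ∈ φ, clauseVal (boolToReal b) c = 1

/-- Homogenized value of a literal at `z = (x, y) ∈ ℝⁿ × ℝ` (coordinates `0,…,n-1` are `x`,
the last coordinate is `y`): `L_{(i,true)}(z) = sin(x_i)sin(y)` and
`L_{(i,false)}(z) = sin²(y) − sin(x_i)sin(y)`. -/
def homLitVal {n : ℕ} (z : EuclideanSpace ℝ (Fin (n+1))) (l : Lit n) : ℝ :=
  if l.2 then Real.sin (z l.1.castSucc) * Real.sin (z (Fin.last n))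
  else Real.sin (z (Fin.last n)) ^ 2 - Real.sin (z l.1.castSucc) * Real.sin (z (Fin.last n))

/-- The homogenized quartic trigonometric polynomial `t_h` associated with `φ`. -/
def tHom {n : ℕ} (φ : List (Clause3 n)) (z : EuclideanSpace ℝ (Fin (n+1))) : ℝ :=
  (∑ i : Fin n,
      Real.sin (z i.castSucc) ^ 2 * (Real.sin (z (Fin.last n)) - Real.sin (z i.castSucc)) ^ 2)
    + (φ.map (fun c => (homLitVal z c.1 + homLitVal z c.2.1 + homLitVal z c.2.2
        - Real.sin (z (Fin.last n)) ^ 2) ^ 2)).sum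

/-- `x` is a solution of the ODE `x' = F(x)` on the time set `I`: a differentiable curve
whose derivative at every `t ∈ I` equals `F (x t)`. -/
def IsSolutionOn {E : Type*} [NormedAddCommGroup E] [NormedSpace ℝ E]
    (F : E → E) (x : ℝ → E) (I : Set ℝ) : Prop :=
  ∀ t ∈ I, HasDerivAt x (F (x t)) t

/-- The origin is stable in the sense of Lyapunov for `x' = F(x)`. -/
def LyapunovStable {E : Type*} [NormedAddCommGroup E] [NormedSpace ℝ E] (F : E → E) : Prop :=
  ∀ ε > (0:ℝ), ∃ δ > (0:ℝ), ∀ (T : ℝ) (x : ℝ → E),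
    IsSolutionOn F x (Set.Icc 0 T) → ‖x 0‖ < δ → ∀ t ∈ Set.Icc 0 T, ‖x t‖ < ε

/-- The origin is locally attractive for `x' = F(x)`. -/
def LocallyAttractive {E : Type*} [NormedAddCommGroup E] [NormedSpace ℝ E] (F : E → E) : Prop :=
  ∃ δ > (0:ℝ), ∀ x : ℝ → E, IsSolutionOn F x (Set.Ici 0) → ‖x 0‖ < δ →
    Filter.Tendsto x Filter.atTop (nhds 0)

/-- The origin is locally asymptotically stable for `x' = F(x)`. -/
def LAS {E : Type*} [NormedAddCommGroup E] [NormedSpace ℝ E] (F : E → E) : Prop :=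
  LyapunovStable F ∧ LocallyAttractive F


namespace Stmt4Aux

abbrev EE (n : ℕ) := EuclideanSpace ℝ (Fin (n+1))

def Phi {n : ℕ} : (Fin (n+1) → ℝ) ≃L[ℝ] EE n := (PiLp.continuousLinearEquiv 2 ℝ _).symm

@[simp] lemma Phi_apply {n : ℕ} (f : Fin (n+1) → ℝ) (k : Fin (n+1)) : Phi f k = f k := rfl

lemma coord_le {n : ℕ} (z : EE n) (k : Fin (n+1)) : |z k| ≤ ‖z‖ := by
  rw [EuclideanSpace.norm_eq, ← Real.sqrt_sq_eq_abs]
  apply Real.sqrt_le_sqrt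
  have : |z k|^2 ≤ ∑ i, ‖z i‖^2 := by
    refine Finset.single_le_sum (f := fun i => ‖z i‖^2) (fun i _ => by positivity)
      (Finset.mem_univ k) |>.trans_eq' ?_
    simp [Real.norm_eq_abs]
  simpa [sq_abs] using this

lemma norm_Phi_le {n : ℕ} (v : Fin (n+1) → ℝ) (z : EE n) (h : ∀ k, |v k| ≤ 2 * |z k|) :
    ‖Phi v‖ ≤ 2 * ‖z‖ := by
  rw [EuclideanSpace.norm_eq, EuclideanSpace.norm_eq]
  have h1 : (∑ i, ‖(Phi v) i‖^2) ≤ 4 * ∑ i, ‖z i‖^2 := by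
    rw [Finset.mul_sum]
    refine Finset.sum_le_sum fun i _ => ?_
    have := h i
    simp only [Phi_apply, Real.norm_eq_abs]
    nlinarith [abs_nonneg (v i), abs_nonneg (z i), sq_abs (v i), sq_abs (z i)]
  calc Real.sqrt (∑ i, ‖(Phi v) i‖^2) ≤ Real.sqrt (4 * ∑ i, ‖z i‖^2) := Real.sqrt_le_sqrt h1
  _ = 2 * Real.sqrt (∑ i, ‖z i‖^2) := by
      rw [show (4:ℝ) = 2^2 by norm_num, Real.sqrt_mul (by positivity), Real.sqrt_sq (by norm_num)]

lemma half_le_cos {u : ℝ} (hu : |u| ≤ 1/2) : 1/2 ≤ Real.cos u := by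
  have h := Real.cos_bound (by linarith : |u| ≤ 1)
  have h1 : |u|^4 ≤ (1/2)^4 := pow_le_pow_left₀ (abs_nonneg u) hu 4
  have h2 : u^2 ≤ (1/2)^2 := by rw [← sq_abs]; exact pow_le_pow_left₀ (abs_nonneg u) hu 2
  have h3 := abs_sub_le_iff.mp h
  nlinarith [h3.1, h3.2]

lemma diff_sin_coord {n : ℕ} (k : Fin (n+1)) :
    Differentiable ℝ (fun z : EE n => Real.sin (z k)) :=
  Real.differentiable_sin.comp (by exact (EuclideanSpace.proj k : EE n →L[ℝ] ℝ).differentiable)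

lemma diff_homLit {n : ℕ} (l : Lit n) : Differentiable ℝ (fun z : EE n => homLitVal z l) := by
  obtain ⟨i, b⟩ := l
  cases b <;> simp only [homLitVal, Bool.false_eq_true, if_false, if_true] <;>
  · first
    | exact ((diff_sin_coord _).pow 2).sub ((diff_sin_coord _).mul (diff_sin_coord _))
    | exact (diff_sin_coord _).mul (diff_sin_coord _)

lemma diff_clause {n : ℕ} (c : Clause3 n) :
    Differentiable ℝ (fun z : EE n => (homLitVal z c.1 + homLitVal z c.2.1 + homLitVal z c.2.2
      - Real.sin (z (Fin.last n)) ^ 2) ^ 2) :=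
  ((((diff_homLit c.1).add (diff_homLit c.2.1)).add (diff_homLit c.2.2)).sub
    ((diff_sin_coord _).pow 2)).pow 2

lemma diff_list {n : ℕ} (ψ : List (Clause3 n)) :
    Differentiable ℝ (fun z : EE n => (ψ.map (fun c => (homLitVal z c.1 + homLitVal z c.2.1
      + homLitVal z c.2.2 - Real.sin (z (Fin.last n)) ^ 2) ^ 2)).sum) := by
  induction ψ with
  | nil => simpa using differentiable_const (0:ℝ)
  | cons c t ih =>
    simp only [List.map_cons, List.sum_cons]
    exact (diff_clause c).add ih

lemma tHom_diff {n : ℕ} (φ : List (Clause3 n)) : Differentiable ℝ (tHom φ) := by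
  unfold tHom
  exact (Differentiable.fun_sum (fun i _ =>
    ((diff_sin_coord _).pow 2).mul (((diff_sin_coord _).sub (diff_sin_coord _)).pow 2))).add
    (diff_list φ)

lemma tHom_nonneg {n : ℕ} (φ : List (Clause3 n)) (z : EE n) : 0 ≤ tHom φ z := by
  unfold tHom
  apply add_nonneg
  · exact Finset.sum_nonneg fun i _ => by positivity
  · apply List.sum_nonneg
    intro a ha
    simp only [List.mem_map] at ha
    obtain ⟨c, _, rfl⟩ := ha
    positivity

lemma tHom_zero {n : ℕ} (φ : List (Clause3 n)) : tHom φ 0 = 0 := by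
  have hz : ∀ k, (0 : EE n) k = 0 := fun _ => rfl
  unfold tHom
  rw [List.sum_eq_zero, Finset.sum_eq_zero] <;> simp [homLitVal, hz]

def sc {n : ℕ} (c : ℝ) (z : EE n) : EE n := Phi (fun k => Real.arcsin (c * Real.sin (z k)))

@[simp] lemma sc_apply {n : ℕ} (c : ℝ) (z : EE n) (k : Fin (n+1)) :
    sc c z k = Real.arcsin (c * Real.sin (z k)) := rfl

lemma sin_sc {n : ℕ} {c : ℝ} {z : EE n} (h : ∀ k, |c * Real.sin (z k)| ≤ 1) (k : Fin (n+1)) :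
    Real.sin (sc c z k) = c * Real.sin (z k) := by
  have := abs_le.mp (h k)
  exact Real.sin_arcsin this.1 this.2

lemma homLit_sc {n : ℕ} {c : ℝ} {z : EE n} (h : ∀ k, |c * Real.sin (z k)| ≤ 1) (l : Lit n) :
    homLitVal (sc c z) l = c^2 * homLitVal z l := by
  obtain ⟨i, b⟩ := l
  cases b <;> simp only [homLitVal, Bool.false_eq_true, if_false, if_true] <;>
    rw [sin_sc h, sin_sc h] <;> ring

lemma tHom_sc {n : ℕ} (φ : List (Clause3 n)) {c : ℝ} {z : EE n}
    (h : ∀ k, |c * Real.sin (z k)| ≤ 1) :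
    tHom φ (sc c z) = c^4 * tHom φ z := by
  unfold tHom
  rw [mul_add]
  congr 1
  · rw [Finset.mul_sum]
    refine Finset.sum_congr rfl fun i _ => ?_
    rw [sin_sc h, sin_sc h]
    ring
  · induction φ with
    | nil => simp
    | cons cl t ih =>
      simp only [List.map_cons, List.sum_cons, mul_add, ih]
      congr 1
      rw [homLit_sc h, homLit_sc h, homLit_sc h, sin_sc h]
      ring

lemma coord_deriv {n : ℕ} (z : EE n) (k : Fin (n+1)) (hz : |z k| ≤ 1/2) :
    HasDerivAt (fun c : ℝ => Real.arcsin (c * Real.sin (z k)))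
      (Real.sin (z k) / Real.cos (z k)) 1 := by
  have hs : |Real.sin (z k)| ≤ 1/2 := (Real.abs_sin_le_abs).trans hz
  have hs' := abs_le.mp hs
  have h1 : Real.sin (z k) ≠ -1 := by intro h; rw [h] at hs'; linarith [hs'.1]
  have h2 : Real.sin (z k) ≠ 1 := by intro h; rw [h] at hs'; linarith [hs'.2]
  have hbase := Real.hasDerivAt_arcsin h1 h2
  have hbase' : HasDerivAt Real.arcsin (1 / Real.sqrt (1 - Real.sin (z k) ^ 2))
      ((fun c : ℝ => c * Real.sin (z k)) 1) := by simpa using hbase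
  have hlin : HasDerivAt (fun c : ℝ => c * Real.sin (z k)) (Real.sin (z k)) 1 := by
    simpa using (hasDerivAt_id (1:ℝ)).mul_const (Real.sin (z k))
  have hcomp := hbase'.comp 1 hlin
  have hzk := abs_le.mp hz
  have hpi : -(π/2) ≤ z k ∧ z k ≤ π/2 := by
    have := Real.pi_gt_three; constructor <;> linarith [hzk.1, hzk.2]
  have hcos : Real.sqrt (1 - Real.sin (z k) ^ 2) = Real.cos (z k) :=
    (Real.cos_eq_sqrt_one_sub_sin_sq hpi.1 hpi.2).symm
  have hcosp : (0:ℝ) < Real.cos (z k) := lt_of_lt_of_le (by norm_num) (half_le_cos hz)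
  rw [hcos] at hcomp
  refine hcomp.congr_deriv ?_
  rw [div_mul_eq_mul_div, one_mul]

lemma euler {n : ℕ} (φ : List (Clause3 n)) (z : EE n) (hz : ∀ k, |z k| ≤ 1/2) :
    fderiv ℝ (tHom φ) z (Phi (fun k => Real.sin (z k) / Real.cos (z k))) = 4 * tHom φ z := by
  set W : EE n := Phi (fun k => Real.sin (z k) / Real.cos (z k)) with hW
  have hpi0 : HasDerivAt (fun c : ℝ => fun k => Real.arcsin (c * Real.sin (z k)))
      (fun k => Real.sin (z k) / Real.cos (z k)) 1 :=
    hasDerivAt_pi.mpr (fun k => coord_deriv z k (hz k))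
  have hγ : HasDerivAt (fun c : ℝ => sc c z) W 1 := by
    have := (Phi (n := n)).toContinuousLinearMap.hasFDerivAt.comp_hasDerivAt 1 hpi0
    exact this
  have hγ1 : sc 1 z = z := by
    ext k
    have hzk := abs_le.mp (hz k)
    have := Real.pi_gt_three
    simp only [sc_apply, one_mul]
    exact Real.arcsin_sin (by linarith) (by linarith)
  have hchain : HasDerivAt (fun c : ℝ => tHom φ (sc c z)) (fderiv ℝ (tHom φ) z W) 1 := by
    have hd := ((tHom_diff φ) (sc 1 z)).hasFDerivAt
    have h2 := hd.comp_hasDerivAt 1 hγ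
    rw [hγ1] at h2
    exact h2
  have heq : (fun c : ℝ => tHom φ (sc c z)) =ᶠ[nhds (1:ℝ)] fun c => c^4 * tHom φ z := by
    have hmem : Ioo (0:ℝ) 2 ∈ nhds (1:ℝ) := Ioo_mem_nhds (by norm_num) (by norm_num)
    filter_upwards [hmem] with c hc
    apply tHom_sc
    intro k
    have hs : |Real.sin (z k)| ≤ 1/2 := (Real.abs_sin_le_abs).trans (hz k)
    rw [abs_mul]
    have hc2 : |c| ≤ 2 := by rw [abs_le]; constructor <;> [linarith [hc.1]; linarith [hc.2]]
    nlinarith [abs_nonneg c, abs_nonneg (Real.sin (z k))]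
  have hpoly : HasDerivAt (fun c : ℝ => c^4 * tHom φ z) (4 * tHom φ z) 1 := by
    have := (hasDerivAt_pow 4 (1:ℝ)).mul_const (tHom φ z)
    simpa using this
  have hchain' : HasDerivAt (fun c : ℝ => tHom φ (sc c z)) (4 * tHom φ z) 1 :=
    hpoly.congr_of_eventuallyEq heq
  exact hchain.unique hchain'

lemma inner_gradient {n : ℕ} (f : EE n → ℝ) (z v : EE n) :
    (inner ℝ (gradient f z) v : ℝ) = fderiv ℝ f z v := by
  rw [gradient]
  exact InnerProductSpace.toDual_symm_apply

lemma grad_ineq {n : ℕ} (φ : List (Clause3 n)) (z : EE n) (hz : ∀ k, |z k| ≤ 1/2) :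
    4 * tHom φ z ≤ ‖gradient (tHom φ) z‖ * (2 * ‖z‖) := by
  have he := euler φ z hz
  have hWle : ‖Phi (n := n) (fun k => Real.sin (z k) / Real.cos (z k))‖ ≤ 2 * ‖z‖ := by
    apply norm_Phi_le
    intro k
    have hs : |Real.sin (z k)| ≤ |z k| := Real.abs_sin_le_abs
    have hc : 1/2 ≤ Real.cos (z k) := half_le_cos (hz k)
    have hcp : (0:ℝ) < Real.cos (z k) := by linarith
    rw [abs_div, abs_of_pos hcp, div_le_iff₀ hcp]
    nlinarith [abs_nonneg (z k)]
  calc 4 * tHom φ z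
      = (inner ℝ (gradient (tHom φ) z) (Phi (fun k => Real.sin (z k) / Real.cos (z k))) : ℝ) := by
        rw [inner_gradient, he]
    _ ≤ ‖gradient (tHom φ) z‖ * ‖Phi (n := n) (fun k => Real.sin (z k) / Real.cos (z k))‖ :=
        real_inner_le_norm _ _
    _ ≤ ‖gradient (tHom φ) z‖ * (2 * ‖z‖) := by
        exact mul_le_mul_of_nonneg_left hWle (norm_nonneg _)

lemma list_sq_zero {α : Type*} (f : α → ℝ) :
    ∀ ψ : List α, (ψ.map (fun c => (f c)^2)).sum = 0 → ∀ c ∈ ψ, f c = 0 := by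
  intro ψ
  induction ψ with
  | nil => simp
  | cons a t ih =>
    intro h c hc
    simp only [List.map_cons, List.sum_cons] at h
    have h1 : 0 ≤ (f a)^2 := sq_nonneg _
    have h2 : 0 ≤ (t.map (fun c => (f c)^2)).sum := List.sum_nonneg (by
      intro u hu
      simp only [List.mem_map] at hu
      obtain ⟨c', _, rfl⟩ := hu
      positivity)
    rcases List.mem_cons.mp hc with rfl | hc'
    · have h3 : (f c)^2 = 0 := by linarith
      exact pow_eq_zero_iff two_ne_zero |>.mp h3
    · exact ih (by linarith) c hc'

lemma tHom_pos {n : ℕ} (φ : List (Clause3 n)) (hns : ¬∃ b : Fin n → Bool, OneInThreeSat b φ)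
    (z : EE n) (hz1 : ∀ k, |z k| ≤ 1) (hz0 : z ≠ 0) : 0 < tHom φ z := by
  rcases (tHom_nonneg φ z).lt_or_eq with h | h
  · exact h
  exfalso
  unfold tHom at h
  have hA : (0:ℝ) ≤ ∑ i : Fin n,
      Real.sin (z i.castSucc) ^ 2 * (Real.sin (z (Fin.last n)) - Real.sin (z i.castSucc)) ^ 2 :=
    Finset.sum_nonneg fun i _ => by positivity
  have hB : (0:ℝ) ≤ (φ.map (fun c => (homLitVal z c.1 + homLitVal z c.2.1 + homLitVal z c.2.2
      - Real.sin (z (Fin.last n)) ^ 2) ^ 2)).sum := by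
    apply List.sum_nonneg
    intro a ha
    simp only [List.mem_map] at ha
    obtain ⟨c, _, rfl⟩ := ha
    positivity
  have hAeq : (∑ i : Fin n,
      Real.sin (z i.castSucc) ^ 2 * (Real.sin (z (Fin.last n)) - Real.sin (z i.castSucc)) ^ 2) = 0 := by
    linarith
  have hBeq : (φ.map (fun c => (homLitVal z c.1 + homLitVal z c.2.1 + homLitVal z c.2.2
      - Real.sin (z (Fin.last n)) ^ 2) ^ 2)).sum = 0 := by linarith
  have hA0 := (Finset.sum_eq_zero_iff_of_nonneg (fun i _ => by positivity)).mp hAeq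
  have hdich : ∀ i : Fin n, Real.sin (z i.castSucc) = 0 ∨
      Real.sin (z i.castSucc) = Real.sin (z (Fin.last n)) := by
    intro i
    have := hA0 i (Finset.mem_univ i)
    rcases mul_eq_zero.mp this with h' | h'
    · exact Or.inl (pow_eq_zero_iff two_ne_zero |>.mp h')
    · right
      have := pow_eq_zero_iff two_ne_zero |>.mp h'
      linarith
  have hB0 : ∀ c ∈ φ, homLitVal z c.1 + homLitVal z c.2.1 + homLitVal z c.2.2
      - Real.sin (z (Fin.last n)) ^ 2 = 0 :=
    list_sq_zero (fun c => homLitVal z c.1 + homLitVal z c.2.1 + homLitVal z c.2.2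
      - Real.sin (z (Fin.last n)) ^ 2) φ hBeq
  have hzero : ∀ k : Fin (n+1), Real.sin (z k) = 0 → z k = 0 := by
    intro k hk
    have h1 := abs_le.mp (hz1 k)
    have h2 := Real.pi_gt_three
    exact (Real.sin_eq_zero_iff_of_lt_of_lt (by linarith) (by linarith)).mp hk
  by_cases hy : Real.sin (z (Fin.last n)) = 0
  · apply hz0
    ext k
    show z k = 0
    induction k using Fin.lastCases with
    | last => exact hzero _ hy
    | cast i =>
      apply hzero
      rcases hdich i with h' | h'
      · exact h'
      · rw [h', hy]
  · apply hns
    refine ⟨fun i => decide (Real.sin (z i.castSucc) = Real.sin (z (Fin.last n))), ?_⟩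
    intro c hc
    set b : Fin n → Bool := fun i => decide (Real.sin (z i.castSucc) = Real.sin (z (Fin.last n)))
      with hbdef
    have hlit : ∀ l : Lit n, homLitVal z l
        = litVal (boolToReal b) l * Real.sin (z (Fin.last n)) ^ 2 := by
      rintro ⟨i, s⟩
      have hbi : boolToReal b i = if Real.sin (z i.castSucc) = Real.sin (z (Fin.last n))
          then (1:ℝ) else 0 := by
        simp [boolToReal, hbdef]
      cases s
      · simp only [homLitVal, litVal, if_false, Bool.false_eq_true]
        rw [hbi]
        by_cases hc' : Real.sin (z i.castSucc) = Real.sin (z (Fin.last n))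
        · rw [if_pos hc', hc']; ring
        · rw [if_neg hc', (hdich i).resolve_right hc']; ring
      · simp only [homLitVal, litVal, if_true]
        rw [hbi]
        by_cases hc' : Real.sin (z i.castSucc) = Real.sin (z (Fin.last n))
        · rw [if_pos hc', hc']; ring
        · rw [if_neg hc', (hdich i).resolve_right hc']; ring
    have hcz := hB0 c hc
    rw [hlit c.1, hlit c.2.1, hlit c.2.2] at hcz
    have hy2 : Real.sin (z (Fin.last n)) ^ 2 ≠ 0 := pow_ne_zero 2 hy
    have : (clauseVal (boolToReal b) c) * Real.sin (z (Fin.last n)) ^ 2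
        = 1 * Real.sin (z (Fin.last n)) ^ 2 := by
      unfold clauseVal
      ring_nf
      ring_nf at hcz
      linarith
    exact mul_right_cancel₀ hy2 this

lemma deriv_along {n : ℕ} (φ : List (Clause3 n)) (x : ℝ → EE n) (t : ℝ)
    (hx : HasDerivAt x (-gradient (tHom φ) (x t)) t) :
    HasDerivAt (fun s => tHom φ (x s)) (-‖gradient (tHom φ) (x t)‖^2) t := by
  have hd := ((tHom_diff φ) (x t)).hasFDerivAt
  have h := hd.comp_hasDerivAt t hx
  have hval : fderiv ℝ (tHom φ) (x t) (-gradient (tHom φ) (x t))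
      = -‖gradient (tHom φ) (x t)‖^2 := by
    rw [← inner_gradient, inner_neg_right, real_inner_self_eq_norm_sq]
  rw [hval] at h
  exact h

lemma antitone_along {n : ℕ} (φ : List (Clause3 n)) (x : ℝ → EE n) {I : Set ℝ}
    (hI : Convex ℝ I) (hx : IsSolutionOn (fun z => -gradient (tHom φ) z) x I) :
    AntitoneOn (fun s => tHom φ (x s)) I := by
  apply antitoneOn_of_deriv_nonpos hI
  · intro t ht
    exact ((deriv_along φ x t (hx t ht)).continuousAt).continuousWithinAt
  · intro t ht
    have ht' : t ∈ I := interior_subset ht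
    exact (deriv_along φ x t (hx t ht')).differentiableAt.differentiableWithinAt
  · intro t ht
    have ht' : t ∈ I := interior_subset ht
    rw [(deriv_along φ x t (hx t ht')).deriv]
    exact neg_nonpos.mpr (by positivity)

lemma min_pos {n : ℕ} (φ : List (Clause3 n)) (hns : ¬∃ b : Fin n → Bool, OneInThreeSat b φ)
    {s : Set (EE n)} (hc : IsCompact s) (hne : s.Nonempty)
    (hs : ∀ z ∈ s, z ≠ 0 ∧ ‖z‖ ≤ 1) :
    ∃ m > 0, ∀ z ∈ s, m ≤ tHom φ z := by
  obtain ⟨z₀, hz₀s, hmin⟩ := hc.exists_isMinOn hne ((tHom_diff φ).continuous.continuousOn)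
  obtain ⟨hne0, hle1⟩ := hs z₀ hz₀s
  exact ⟨tHom φ z₀, tHom_pos φ hns z₀ (fun k => (coord_le z₀ k).trans hle1) hne0,
    fun z hz => hmin hz⟩

lemma core {n : ℕ} (φ : List (Clause3 n)) (hns : ¬∃ b : Fin n → Bool, OneInThreeSat b φ)
    {r : ℝ} (hr0 : 0 < r) (hr1 : r ≤ 1) :
    ∃ δ > 0, δ ≤ r ∧ ∀ (T : ℝ) (x : ℝ → EE n),
      IsSolutionOn (fun z => -gradient (tHom φ) z) x (Icc 0 T) → ‖x 0‖ < δ →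
      ∀ t ∈ Icc 0 T, ‖x t‖ < r := by
  obtain ⟨m, hm, hmin⟩ := min_pos φ hns (isCompact_sphere 0 r)
    (NormedSpace.sphere_nonempty.mpr hr0.le)
    (fun z hz => by
      rw [mem_sphere_zero_iff_norm] at hz
      constructor
      · intro h0
        rw [h0, norm_zero] at hz
        exact hr0.ne' hz.symm
      · rw [hz]; exact hr1)
  have hopen : IsOpen {z : EE n | tHom φ z < m} :=
    isOpen_lt (tHom_diff φ).continuous continuous_const
  have h0mem : (0:EE n) ∈ {z : EE n | tHom φ z < m} := by
    simp only [mem_setOf_eq, tHom_zero]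
    exact hm
  obtain ⟨δ₀, hδ₀, hball⟩ := Metric.isOpen_iff.mp hopen 0 h0mem
  refine ⟨min δ₀ r, lt_min hδ₀ hr0, min_le_right _ _, ?_⟩
  intro T x hsol hx0 t ht
  by_contra hcon
  push_neg at hcon
  have hcontx : ContinuousOn (fun s => ‖x s‖) (Icc 0 t) := by
    intro s hs
    have hsT : s ∈ Icc 0 T := ⟨hs.1, hs.2.trans ht.2⟩
    exact ((hsol s hsT).continuousAt.norm).continuousWithinAt
  have hx0r : ‖x 0‖ ≤ r := le_of_lt (lt_of_lt_of_le hx0 (min_le_right _ _))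
  obtain ⟨s, hsmem, hsr⟩ := intermediate_value_Icc ht.1 hcontx ⟨hx0r, hcon⟩
  have hsT : s ∈ Icc 0 T := ⟨hsmem.1, hsmem.2.trans ht.2⟩
  have h1 : m ≤ tHom φ (x s) := hmin _ (mem_sphere_zero_iff_norm.mpr hsr)
  have hanti := antitone_along φ x (convex_Icc 0 T) hsol
  have h2 : tHom φ (x s) ≤ tHom φ (x 0) :=
    hanti ⟨le_refl 0, ht.1.trans ht.2⟩ hsT hsmem.1
  have h3 : tHom φ (x 0) < m := by
    apply hball
    rw [Metric.mem_ball, dist_zero_right]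
    exact lt_of_lt_of_le hx0 (min_le_left _ _)
  linarith

end Stmt4Aux

theorem stmt4 {n : ℕ} (φ : List (Clause3 n)) :
    LAS (fun z => -gradient (tHom φ) z) ↔ ¬ ∃ b : Fin n → Bool, OneInThreeSat b φ := by
  open Stmt4Aux in
  constructor
  · -- LAS → unsatisfiable
    rintro ⟨_, hattr⟩ ⟨b, hb⟩
    obtain ⟨δ, hδ, hattr⟩ := hattr
    set s : ℝ := δ / (Real.sqrt (n+1) + 1) with hs
    have hsq : (0:ℝ) < Real.sqrt (n+1) + 1 := by positivity
    have hspos : 0 < s := div_pos hδ hsq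
    set v : Fin (n+1) → ℝ := Fin.snoc (fun i => if b i then s else 0) s with hv
    set z₀ : EE n := Phi v with hz₀
    have hvlast : v (Fin.last n) = s := by simp [hv]
    have hvcast : ∀ i : Fin n, v i.castSucc = if b i then s else 0 := fun i => by simp [hv]
    have hcoords : ∀ k, |v k| ≤ s := by
      intro k
      induction k using Fin.lastCases with
      | last => rw [hvlast, abs_of_pos hspos]
      | cast i =>
        rw [hvcast]
        rcases b i <;> simp [abs_of_pos hspos, hspos.le]
    have hnorm : ‖z₀‖ < δ := by
      rw [hz₀, EuclideanSpace.norm_eq]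
      have hb1 : (∑ i, ‖Phi v i‖^2) ≤ (n+1) * s^2 := by
        calc (∑ i, ‖Phi v i‖^2) ≤ ∑ _i : Fin (n+1), s^2 := by
              refine Finset.sum_le_sum fun i _ => ?_
              simp only [Phi_apply, Real.norm_eq_abs]
              nlinarith [hcoords i, abs_nonneg (v i)]
          _ = (n+1) * s^2 := by
              rw [Finset.sum_const, Finset.card_univ]
              simp [nsmul_eq_mul]
      calc Real.sqrt (∑ i, ‖Phi v i‖^2) ≤ Real.sqrt ((n+1) * s^2) := Real.sqrt_le_sqrt hb1
        _ = Real.sqrt (n+1) * s := by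
            rw [Real.sqrt_mul (by positivity), Real.sqrt_sq hspos.le]
        _ < δ := by
            have h1 : Real.sqrt (n+1) * s < (Real.sqrt (n+1) + 1) * s := by nlinarith
            have h2 : (Real.sqrt (n+1) + 1) * s = δ := by
              rw [hs]; field_simp
            linarith
    have hsin_cast : ∀ i : Fin n, Real.sin (z₀ i.castSucc)
        = (boolToReal b i) * Real.sin s := by
      intro i
      rw [hz₀, Phi_apply, hvcast]
      rcases hbi : b i <;> simp [boolToReal, hbi]
    have hsin_last : Real.sin (z₀ (Fin.last n)) = Real.sin s := by
      rw [hz₀, Phi_apply, hvlast]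
    have hval : tHom φ z₀ = 0 := by
      unfold tHom
      rw [Finset.sum_eq_zero, List.sum_eq_zero, add_zero]
      · intro a ha
        simp only [List.mem_map] at ha
        obtain ⟨c, hcφ, rfl⟩ := ha
        have hlit : ∀ l : Lit n, homLitVal z₀ l
            = litVal (boolToReal b) l * Real.sin s ^ 2 := by
          rintro ⟨i, bb⟩
          cases bb <;>
            simp only [homLitVal, litVal, if_true, if_false, Bool.false_eq_true] <;>
            rw [hsin_cast, hsin_last] <;> ring
        rw [hlit c.1, hlit c.2.1, hlit c.2.2, hsin_last]
        have hcv := hb c hcφ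
        unfold clauseVal at hcv
        have h1 : litVal (boolToReal b) c.1 * Real.sin s ^ 2
            + litVal (boolToReal b) c.2.1 * Real.sin s ^ 2
            + litVal (boolToReal b) c.2.2 * Real.sin s ^ 2 - Real.sin s ^ 2 = 0 := by
          linear_combination (Real.sin s ^ 2) * hcv
        rw [h1]
        norm_num
      · intro i _
        rw [hsin_cast, hsin_last]
        rcases hbi : b i <;> simp [boolToReal, hbi] <;> ring
    have hmin : IsLocalMin (tHom φ) z₀ :=
      Filter.Eventually.of_forall (fun z => by rw [hval]; exact tHom_nonneg φ z)
    have hgrad0 : gradient (tHom φ) z₀ = 0 := by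
      rw [gradient, hmin.fderiv_eq_zero, map_zero]
    have hsol : IsSolutionOn (fun z => -gradient (tHom φ) z) (fun _ => z₀) (Set.Ici 0) := by
      intro t _
      have h := hasDerivAt_const t z₀
      simpa [hgrad0] using h
    have htend := hattr _ hsol (by simpa using hnorm)
    have hz0 : z₀ = 0 := tendsto_nhds_unique tendsto_const_nhds htend
    have : v (Fin.last n) = 0 := by
      have := congrFun (congrArg (fun (w : EE n) => (w : Fin (n+1) → ℝ)) hz0) (Fin.last n)
      simpa [hz₀] using this
    rw [hvlast] at this
    exact hspos.ne' this
  · -- unsatisfiable → LAS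
    intro hns
    constructor
    · -- Lyapunov stability
      intro ε hε
      obtain ⟨δ, hδ, _, hcore⟩ := core φ hns (lt_min hε one_pos) (min_le_right ε 1)
      refine ⟨δ, hδ, ?_⟩
      intro T x hsol hx0 t ht
      exact lt_of_lt_of_le (hcore T x hsol hx0 t ht) (min_le_left _ _)
    · -- local attractivity
      obtain ⟨δ, hδ, _, hcore⟩ := core φ hns (show (0:ℝ) < 1/2 by norm_num) (by norm_num)
      refine ⟨δ, hδ, ?_⟩
      intro x hsol hx0
      have hbound : ∀ t, 0 ≤ t → ‖x t‖ < 1/2 := by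
        intro t ht
        exact hcore t x (fun u hu => hsol u hu.1) hx0 t ⟨ht, le_refl t⟩
      set g : ℝ → ℝ := fun u => tHom φ (x u) with hg
      have hganti : AntitoneOn g (Set.Ici 0) := antitone_along φ x (convex_Ici 0) hsol
      have hgnn : ∀ t, 0 ≤ g t := fun t => tHom_nonneg φ (x t)
      have hgrad : ∀ t, 0 ≤ t → 4 * g t ≤ ‖gradient (tHom φ) (x t)‖ := by
        intro t ht
        have h1 := grad_ineq φ (x t) (fun k =>
          (coord_le _ k).trans (le_of_lt (hbound t ht)))
        have h2 : 2 * ‖x t‖ ≤ 1 := by linarith [hbound t ht]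
        calc 4 * g t ≤ ‖gradient (tHom φ) (x t)‖ * (2 * ‖x t‖) := h1
          _ ≤ ‖gradient (tHom φ) (x t)‖ * 1 :=
              mul_le_mul_of_nonneg_left h2 (norm_nonneg _)
          _ = ‖gradient (tHom φ) (x t)‖ := mul_one _
      have hclaim : ∀ a, 0 < a → ∃ T, 0 ≤ T ∧ g T < a := by
        intro a ha
        by_contra hcon
        push_neg at hcon
        have hderiv : ∀ t ∈ Set.Ici (0:ℝ),
            HasDerivAt (fun u => g u + 16*a^2*u)
              (-‖gradient (tHom φ) (x t)‖^2 + 16*a^2) t := by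
          intro t ht
          exact (deriv_along φ x t (hsol t ht)).add
            (by simpa using (hasDerivAt_id t).const_mul (16*a^2))
        have hanti2 : AntitoneOn (fun u => g u + 16*a^2*u) (Set.Ici 0) := by
          apply antitoneOn_of_deriv_nonpos (convex_Ici 0)
          · intro t ht
            exact (hderiv t ht).continuousAt.continuousWithinAt
          · intro t ht
            exact (hderiv t (interior_subset ht)).differentiableAt.differentiableWithinAt
          · intro t ht
            have ht' : t ∈ Set.Ici (0:ℝ) := interior_subset ht
            rw [(hderiv t ht').deriv]
            have hga := hcon t ht'
            have hgd := hgrad t ht'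
            nlinarith [norm_nonneg (gradient (tHom φ) (x t)), hgnn t]
        set T : ℝ := g 0 / (16*a^2) + 1 with hT
        have hT0 : (0:ℝ) ≤ T := by
          have := hgnn 0
          positivity
        have hle := hanti2 (mem_Ici.mpr le_rfl) (mem_Ici.mpr hT0) hT0
        simp only at hle
        have hga := hcon T hT0
        have hTval : 16*a^2*T = g 0 + 16*a^2 := by
          rw [hT]
          field_simp
        nlinarith [hgnn T]
      rw [Metric.tendsto_atTop]
      intro ε hε
      rcases lt_or_ge (1/2 : ℝ) ε with hε2 | hε2
      · exact ⟨0, fun t ht => by rw [dist_zero_right]; linarith [hbound t ht]⟩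
      · set K : Set (EE n) := Metric.closedBall 0 (1/2) \ Metric.ball 0 ε with hK
        have hKc : IsCompact K := (isCompact_closedBall _ _).diff Metric.isOpen_ball
        have hKne : K.Nonempty := by
          obtain ⟨z₁, hz₁⟩ := NormedSpace.sphere_nonempty (x := (0:EE n))
            (r := 1/2) |>.mpr (by norm_num)
          rw [mem_sphere_zero_iff_norm] at hz₁
          refine ⟨z₁, Metric.mem_closedBall.mpr (by rw [dist_zero_right, hz₁]), ?_⟩
          rw [Metric.mem_ball, dist_zero_right, hz₁]
          push_neg
          exact hε2
        obtain ⟨m, hm, hminK⟩ := min_pos φ hns hKc hKne (fun z hz => by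
          obtain ⟨hz1, hz2⟩ := hz
          rw [Metric.mem_closedBall, dist_zero_right] at hz1
          rw [Metric.mem_ball, dist_zero_right] at hz2
          push_neg at hz2
          constructor
          · intro h0
            rw [h0, norm_zero] at hz2
            linarith
          · linarith)
        obtain ⟨T, hT0, hgT⟩ := hclaim m hm
        refine ⟨T, ?_⟩
        intro t ht
        have ht0 : (0:ℝ) ≤ t := le_trans hT0 ht
        have hgt : g t ≤ g T := hganti (mem_Ici.mpr hT0) (mem_Ici.mpr ht0) ht
        rw [dist_zero_right]
        by_contra hcon2
        push_neg at hcon2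
        have hxtK : x t ∈ K := by
          constructor
          · rw [Metric.mem_closedBall, dist_zero_right]
            linarith [hbound t ht0]
          · rw [Metric.mem_ball, dist_zero_right]
            push_neg
            exact hcon2
        have := hminK _ hxtK
        linarith
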